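/- (Fisher information of the purifying system.) Let ρ be a full-rank d×d density matrix with spectral decomposition ρ = Σ_j p_j |φ_j⟩⟨φ_j|, p_j > 0, {φ_j} an orthonormal basis, and let H_S be an Hermitian d×d matrix. Define the Hermitian matrix H_A by ⟨φ_a|H_A|φ_b⟩ = −2·(√(p_a p_b)/(p_a + p_b))·⟨φ_b|H_S|φ_a⟩. Then the quantum Fisher information of ρ with respect to H_A equals F_{H_A}(ρ) = Σ_{i,j} (8 p_i p_j (p_i − p_j)² / (p_i + p_j)³) · |⟨φ_i|H_S|φ_j⟩|². In particular, if F_{H_S}(ρ) > 0 then F_{H_A}(ρ) > 0. -/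

import Mathlib

open Matrix Complex Filter Kronecker
open scoped ComplexOrder

noncomputable section

/-- n-fold Kronecker power of a matrix, indexed by functions `Fin n → Fin d`. -/
def kronPow {d : ℕ} (X : Matrix (Fin d) (Fin d) ℂ) (n : ℕ) :
    Matrix (Fin n → Fin d) (Fin n → Fin d) ℂ :=
  Matrix.of fun i j => ∏ k, X (i k) (j k)

/-- The `n`-copy (non-interacting) Hamiltonian `Σᵢ I^{⊗(i-1)} ⊗ H ⊗ I^{⊗(n-i)}`. -/
def nCopyHam {d : ℕ} (H : Matrix (Fin d) (Fin d) ℂ) (n : ℕ) :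
    Matrix (Fin n → Fin d) (Fin n → Fin d) ℂ :=
  ∑ k : Fin n, Matrix.of fun i j =>
    H (i k) (j k) * ∏ l ∈ Finset.univ.erase k, (if i l = j l then (1 : ℂ) else 0)

/-- Time evolution unitary `e^{-iHt}`. -/
def timeEvol {m : Type*} [Fintype m] [DecidableEq m] (H : Matrix m m ℂ) (t : ℝ) :
    Matrix m m ℂ :=
  NormedSpace.exp ((-(Complex.I * (t : ℂ))) • H)

/-- The positive semidefinite square root of a positive semidefinite matrix
(the former `Matrix.PosSemidef.sqrt`). -/
def psdSqrt {m : Type*} [Fintype m] [DecidableEq m] {A : Matrix m m ℂ} (hA : A.PosSemidef) :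
    Matrix m m ℂ :=
  (hA.1.eigenvectorUnitary : Matrix m m ℂ) *
    diagonal ((↑) ∘ (fun i => Real.sqrt (hA.1.eigenvalues i))) *
    (star hA.1.eigenvectorUnitary : Matrix m m ℂ)

/-- Trace norm `‖A‖₁ = Tr √(AᴴA)`. -/
def traceNorm {m : Type*} [Fintype m] [DecidableEq m] (A : Matrix m m ℂ) : ℝ :=
  ((psdSqrt (Matrix.posSemidef_conjTranspose_mul_self A)).trace).re

/-- A quantum channel: a map admitting a Kraus representation. -/
def IsQuantumChannel {m n : Type*} [Fintype m] [DecidableEq m] [Fintype n] [DecidableEq n]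
    (E : Matrix m m ℂ → Matrix n n ℂ) : Prop :=
  ∃ (K : ℕ) (A : Fin K → Matrix n m ℂ),
    (∀ X, E X = ∑ k, A k * X * (A k)ᴴ) ∧ (∑ k, (A k)ᴴ * A k = 1)

/-- Time-translation invariance of a map w.r.t. input/output Hamiltonians. -/
def IsTI {m n : Type*} [Fintype m] [DecidableEq m] [Fintype n] [DecidableEq n]
    (Hin : Matrix m m ℂ) (Hout : Matrix n n ℂ)
    (E : Matrix m m ℂ → Matrix n n ℂ) : Prop :=
  ∀ (t : ℝ) (X : Matrix m m ℂ),
    timeEvol Hout t * E X * timeEvol Hout (-t) =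
      E (timeEvol Hin t * X * timeEvol Hin (-t))

/-- Energy variance of a (unit) vector. -/
def varVec {m : Type*} [Fintype m] (H : Matrix m m ℂ) (ψ : m → ℂ) : ℝ :=
  (star ψ ⬝ᵥ ((H * H) *ᵥ ψ)).re - ((star ψ ⬝ᵥ (H *ᵥ ψ)).re) ^ 2

/-- The quantum Fisher information formula for a given spectral decomposition data. -/
def qfiOf {m : Type*} [Fintype m] (H : Matrix m m ℂ) (p : m → ℝ) (φ : m → m → ℂ) : ℝ :=
  2 * ∑ j, ∑ k,
    if 0 < p j + p k then
      (p j - p k) ^ 2 / (p j + p k) * Complex.normSq (star (φ j) ⬝ᵥ (H *ᵥ φ k))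
    else 0

/-- Quantum Fisher information of a Hermitian (e.g. density) matrix `ρ` w.r.t. `H`. -/
def QFI {m : Type*} [Fintype m] [DecidableEq m] {ρ : Matrix m m ℂ}
    (hρ : ρ.IsHermitian) (H : Matrix m m ℂ) : ℝ :=
  qfiOf H hρ.eigenvalues (fun j i => hρ.eigenvectorBasis j i)

open scoped Classical in
/-- Total positive-semidefinite square root (zero on non-PSD inputs). -/
def msqrt {m : Type*} [Fintype m] [DecidableEq m] (A : Matrix m m ℂ) : Matrix m m ℂ :=
  if h : A.PosSemidef then psdSqrt h else 0

/-- Fidelity `Fid(ρ,σ) = (Tr √(√ρ σ √ρ))² = ‖√σ √ρ‖₁²`. -/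
def fid {m : Type*} [Fintype m] [DecidableEq m] (ρ σ : Matrix m m ℂ) : ℝ :=
  (traceNorm (msqrt σ * msqrt ρ)) ^ 2

/-- Density matrix. -/
def IsDensityMatrix {m : Type*} [Fintype m] (ρ : Matrix m m ℂ) : Prop :=
  ρ.PosSemidef ∧ ρ.trace = 1


theorem qfi_of_purifying_system
    {d : ℕ} (ρ HS HA : Matrix (Fin d) (Fin d) ℂ)
    (p : Fin d → ℝ) (φ : Fin d → Fin d → ℂ)
    (hp : ∀ j, 0 < p j) (hsum : ∑ j, p j = 1)
    (horth : ∀ a b, star (φ a) ⬝ᵥ φ b = if a = b then (1 : ℂ) else 0)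
    (hρdef : ρ = ∑ j, ((p j : ℝ) : ℂ) • Matrix.vecMulVec (φ j) (star (φ j)))
    (hHS : HS.IsHermitian)
    (hHA : ∀ a b, star (φ a) ⬝ᵥ (HA *ᵥ φ b) =
      ((-2 * (Real.sqrt (p a * p b) / (p a + p b)) : ℝ) : ℂ) *
        (star (φ b) ⬝ᵥ (HS *ᵥ φ a))) :
    qfiOf HA p φ =
      ∑ i, ∑ j, (8 * p i * p j * (p i - p j) ^ 2 / (p i + p j) ^ 3) *
        Complex.normSq (star (φ i) ⬝ᵥ (HS *ᵥ φ j)) ∧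
    (0 < qfiOf HS p φ → 0 < qfiOf HA p φ) := by
  have hsp : ∀ a b : Fin d, 0 < p a + p b := fun a b => add_pos (hp a) (hp b)
  have key : qfiOf HA p φ =
      ∑ i, ∑ j, (8 * p i * p j * (p i - p j) ^ 2 / (p i + p j) ^ 3) *
        Complex.normSq (star (φ i) ⬝ᵥ (HS *ᵥ φ j)) := by
    unfold qfiOf
    rw [Finset.mul_sum, Finset.sum_comm]
    refine Finset.sum_congr rfl fun k _ => ?_
    rw [Finset.mul_sum]
    refine Finset.sum_congr rfl fun j _ => ?_
    rw [if_pos (hsp k j), hHA, Complex.normSq_mul, Complex.normSq_ofReal]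
    have h1 : Real.sqrt (p k * p j) * Real.sqrt (p k * p j) = p k * p j :=
      Real.mul_self_sqrt (mul_nonneg (hp k).le (hp j).le)
    have h3 : p k + p j ≠ 0 := (hsp k j).ne'
    have hq : (-2 * (Real.sqrt (p k * p j) / (p k + p j))) *
        (-2 * (Real.sqrt (p k * p j) / (p k + p j))) =
        4 * (p k * p j) / (p k + p j) ^ 2 := by
      field_simp
      linear_combination (4 : ℝ) * h1
    rw [hq]
    have h2 : p j + p k ≠ 0 := (hsp j k).ne'
    field_simp
    ring
  refine ⟨key, fun hS => ?_⟩
  by_contra hcon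
  push_neg at hcon
  have hterm : ∀ i j : Fin d, 0 ≤ (8 * p i * p j * (p i - p j) ^ 2 / (p i + p j) ^ 3) *
        Complex.normSq (star (φ i) ⬝ᵥ (HS *ᵥ φ j)) := by
    intro i j
    refine mul_nonneg (div_nonneg ?_ (pow_nonneg (hsp i j).le 3)) (Complex.normSq_nonneg _)
    exact mul_nonneg (by nlinarith [(hp i).le, (hp j).le, mul_nonneg (hp i).le (hp j).le]) (sq_nonneg _)
  have hzero : ∀ i j : Fin d, (8 * p i * p j * (p i - p j) ^ 2 / (p i + p j) ^ 3) *
        Complex.normSq (star (φ i) ⬝ᵥ (HS *ᵥ φ j)) = 0 := by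
    have hle : (0:ℝ) ≤ ∑ i, ∑ j, (8 * p i * p j * (p i - p j) ^ 2 / (p i + p j) ^ 3) *
        Complex.normSq (star (φ i) ⬝ᵥ (HS *ᵥ φ j)) :=
      Finset.sum_nonneg fun i _ => Finset.sum_nonneg fun j _ => hterm i j
    have heq : ∑ i, ∑ j, (8 * p i * p j * (p i - p j) ^ 2 / (p i + p j) ^ 3) *
        Complex.normSq (star (φ i) ⬝ᵥ (HS *ᵥ φ j)) = 0 :=
      le_antisymm (key ▸ hcon) hle
    intro i j
    have hrow : ∀ i ∈ Finset.univ, (0:ℝ) ≤ ∑ j, (8 * p i * p j * (p i - p j) ^ 2 / (p i + p j) ^ 3) *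
        Complex.normSq (star (φ i) ⬝ᵥ (HS *ᵥ φ j)) :=
      fun i _ => Finset.sum_nonneg fun j _ => hterm i j
    have h5 := (Finset.sum_eq_zero_iff_of_nonneg hrow).mp heq i (Finset.mem_univ i)
    exact (Finset.sum_eq_zero_iff_of_nonneg (fun j _ => hterm i j)).mp h5 j (Finset.mem_univ j)
  have hSzero : qfiOf HS p φ = 0 := by
    unfold qfiOf
    rw [Finset.sum_eq_zero, mul_zero]
    intro j _
    rw [Finset.sum_eq_zero]
    intro k _
    rw [if_pos (hsp j k)]
    have h0 := hzero j k
    have hc : 0 < 8 * p j * p k / (p j + p k) ^ 3 :=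
      div_pos (by nlinarith [mul_pos (hp j) (hp k)]) (pow_pos (hsp j k) 3)
    rcases mul_eq_zero.mp h0 with h | h
    · have : (p j - p k) ^ 2 = 0 := by
        by_contra hne
        have hsq : (0:ℝ) < (p j - p k) ^ 2 := lt_of_le_of_ne (sq_nonneg _) (Ne.symm hne)
        have : 8 * p j * p k * (p j - p k) ^ 2 / (p j + p k) ^ 3 ≠ 0 := by
          refine ne_of_gt (div_pos ?_ (pow_pos (hsp j k) 3))
          exact mul_pos (by nlinarith [mul_pos (hp j) (hp k)]) hsq
        exact this h
      rw [this]
      ring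
    · rw [h, mul_zero]
  linarith

end
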